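/- Let r: ℝ^m → ℝ ∪ {∞} be a proper lsc convex function, x̄ ∈ dom r, ū ∈ ∂r(x̄), and v, d ∈ ℝ^m. Then the pair (v+d, v) belongs to the tangent cone of the graph of Prox_r at (x̄+ū, x̄) if and only if the pair (v, d) belongs to the tangent cone of the graph of ∂r at (x̄, ū). -/

import Mathlib

open Filter

noncomputable section

/-- Bouligand tangent cone to a set `C` at a point `x`. -/
def tangentConeB {X : Type*} [NormedAddCommGroup X] [NormedSpace ℝ X]
    (C : Set X) (x : X) : Set X :=
  {w | ∃ t : ℕ → ℝ, ∃ c : ℕ → X, (∀ k, 0 < t k) ∧ Tendsto t atTop (nhds 0) ∧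
    (∀ k, c k ∈ C) ∧ Tendsto (fun k => (t k)⁻¹ • (c k - x)) atTop (nhds w)}

/-- Convex subdifferential of an extended-real-valued function. -/
def subdiffFn {m : ℕ} (r : EuclideanSpace ℝ (Fin m) → EReal)
    (x : EuclideanSpace ℝ (Fin m)) : Set (EuclideanSpace ℝ (Fin m)) :=
  {u | ∀ y, r x + (((inner ℝ u (y - x) : ℝ)) : EReal) ≤ r y}

/-- For proper lsc convex `r`, `x̄ ∈ dom r`, `ū ∈ ∂r(x̄)`:
`(v+d, v)` lies in the tangent cone to `gph Prox_r = gph (I+∂r)⁻¹` at `(x̄+ū, x̄)`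
iff `(v, d)` lies in the tangent cone to `gph ∂r` at `(x̄, ū)`. -/
theorem stmt7 (m : ℕ) (r : EuclideanSpace ℝ (Fin m) → EReal)
    (hproper : (∃ x, r x ≠ ⊤) ∧ ∀ x, r x ≠ ⊥)
    (hlsc : LowerSemicontinuous r)
    (hconv : ∀ x y : EuclideanSpace ℝ (Fin m), ∀ a b : ℝ, 0 ≤ a → 0 ≤ b → a + b = 1 →
      r (a • x + b • y) ≤ (a : EReal) * r x + (b : EReal) * r y)
    (xb ub : EuclideanSpace ℝ (Fin m)) (hdom : r xb ≠ ⊤) (hub : ub ∈ subdiffFn r xb)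
    (v d : EuclideanSpace ℝ (Fin m)) :
    (v + d, v) ∈ tangentConeB
        {p : EuclideanSpace ℝ (Fin m) × EuclideanSpace ℝ (Fin m) |
          p.1 - p.2 ∈ subdiffFn r p.2} (xb + ub, xb) ↔
      (v, d) ∈ tangentConeB
        {p : EuclideanSpace ℝ (Fin m) × EuclideanSpace ℝ (Fin m) |
          p.2 ∈ subdiffFn r p.1} (xb, ub) := by
  constructor
  · rintro ⟨t, c, ht, ht0, hc, hlim⟩
    refine ⟨t, fun k => ((c k).2, (c k).1 - (c k).2), ht, ht0, fun k => hc k, ?_⟩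
    have h1 : Tendsto (fun k => ((t k)⁻¹ • (c k - (xb + ub, xb))).1) atTop (nhds (v + d)) :=
      (continuous_fst.tendsto _).comp hlim
    have h2 : Tendsto (fun k => ((t k)⁻¹ • (c k - (xb + ub, xb))).2) atTop (nhds v) :=
      (continuous_snd.tendsto _).comp hlim
    have h3 := h1.sub h2
    have key : (fun k => (t k)⁻¹ • ((((c k).2, (c k).1 - (c k).2) :
        EuclideanSpace ℝ (Fin m) × EuclideanSpace ℝ (Fin m)) - (xb, ub)))
        = fun k => (((t k)⁻¹ • (c k - (xb + ub, xb))).2,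
            ((t k)⁻¹ • (c k - (xb + ub, xb))).1 - ((t k)⁻¹ • (c k - (xb + ub, xb))).2) := by
      funext k
      simp only [Prod.smul_def, Prod.mk_sub_mk, Prod.fst_sub, Prod.snd_sub, Prod.smul_fst,
        Prod.smul_snd, Prod.mk.injEq]
      constructor
      · trivial
      · rw [← smul_sub]; congr 1; abel
    rw [key]
    have : Tendsto (fun k => ((((t k)⁻¹ • (c k - (xb + ub, xb))).2,
        ((t k)⁻¹ • (c k - (xb + ub, xb))).1 - ((t k)⁻¹ • (c k - (xb + ub, xb))).2)))
        atTop (nhds (v, (v + d) - v)) := h2.prodMk_nhds h3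
    simpa using this
  · rintro ⟨t, c, ht, ht0, hc, hlim⟩
    refine ⟨t, fun k => ((c k).1 + (c k).2, (c k).1), ht, ht0, fun k => ?_, ?_⟩
    · have := hc k
      simp only [Set.mem_setOf_eq] at this ⊢
      simpa using this
    · have h1 : Tendsto (fun k => ((t k)⁻¹ • (c k - (xb, ub))).1) atTop (nhds v) :=
        (continuous_fst.tendsto _).comp hlim
      have h2 : Tendsto (fun k => ((t k)⁻¹ • (c k - (xb, ub))).2) atTop (nhds d) :=
        (continuous_snd.tendsto _).comp hlim
      have h3 := h1.add h2
      have key : (fun k => (t k)⁻¹ • ((((c k).1 + (c k).2, (c k).1) :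
          EuclideanSpace ℝ (Fin m) × EuclideanSpace ℝ (Fin m)) - (xb + ub, xb)))
          = fun k => (((t k)⁻¹ • (c k - (xb, ub))).1 + ((t k)⁻¹ • (c k - (xb, ub))).2,
              ((t k)⁻¹ • (c k - (xb, ub))).1) := by
        funext k
        simp only [Prod.smul_def, Prod.mk_sub_mk, Prod.fst_sub, Prod.snd_sub, Prod.smul_fst,
          Prod.smul_snd, Prod.mk.injEq]
        constructor
        · rw [← smul_add]; congr 1; abel
        · trivial
      rw [key]
      exact h3.prodMk_nhds h1
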